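/- arXiv:1301.6196 — 2 statements merged into one kernel-verified Lean document; each statement's English description precedes it below -/
import Mathlib

section
/- Let N ≥ 2d and let H = [[0_{d×d}, A],[B, C]] be unitary of size N. Then there exist unitary matrices U, V ∈ U(N−d) such that H = diag(I_d, U) · J · diag(I_d, V*), where J is the N×N permutation-like unitary matrix [[0, I_d, 0],[I_d, 0, 0],[0, 0, I_{N−2d}]]. -/
open Matrix

/-- The `N×N` matrix `J = [[0, I_d, 0],[I_d, 0, 0],[0, 0, I_{N−2d}]]`, where
`N = d + (d + e)`. -/
noncomputable def Jmat (d e : ℕ) :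
    Matrix (Fin d ⊕ (Fin d ⊕ Fin e)) (Fin d ⊕ (Fin d ⊕ Fin e)) ℂ :=
  Matrix.fromBlocks 0
    (Matrix.of fun (i : Fin d) (j : Fin d ⊕ Fin e) => if Sum.inl i = j then 1 else 0)
    (Matrix.of fun (i : Fin d ⊕ Fin e) (j : Fin d) => if i = Sum.inl j then 1 else 0)
    (Matrix.fromBlocks 0 0 0 1)

lemma extend_to_unitary (d e : ℕ) (A : Matrix (Fin d) (Fin d ⊕ Fin e) ℂ)
    (hA : ∀ i j, ∑ k, A i k * star (A j k) = if i = j then 1 else 0) :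
    ∃ V ∈ Matrix.unitaryGroup (Fin d ⊕ Fin e) ℂ,
      ∀ i j, Vᴴ (Sum.inl i) j = A i j := by
  classical
  set v : (Fin d ⊕ Fin e) → EuclideanSpace ℂ (Fin d ⊕ Fin e) :=
    Sum.elim (fun i => (WithLp.equiv 2 _).symm (A i)) (fun _ => 0) with hv
  have hcard : Module.finrank ℂ (EuclideanSpace ℂ (Fin d ⊕ Fin e))
      = Fintype.card (Fin d ⊕ Fin e) := by simp
  have horth : Orthonormal ℂ ((Set.range Sum.inl).restrict v) := by
    rw [orthonormal_iff_ite]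
    rintro ⟨_, a, rfl⟩ ⟨_, c, rfl⟩
    show (inner ℂ (v (Sum.inl a)) (v (Sum.inl c)) : ℂ) = _
    have h1 : (inner ℂ (v (Sum.inl a)) (v (Sum.inl c)) : ℂ)
        = ∑ k, starRingEnd ℂ (A a k) * A c k := by
      simp [hv, PiLp.inner_apply, RCLike.inner_apply, mul_comm]
    have h2 : ∑ k, starRingEnd ℂ (A a k) * A c k = if c = a then 1 else 0 := by
      rw [← hA c a]; congr 1; ext k
      simp only [RCLike.star_def]; ring
    rw [h1, h2]
    by_cases hac : a = c
    · simp [hac]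
    · have hca : ¬ (c = a) := fun h => hac h.symm
      simp [Subtype.ext_iff, hac, hca]
  obtain ⟨b, hb⟩ := horth.exists_orthonormalBasis_extension_of_card_eq hcard
  set M : Matrix (Fin d ⊕ Fin e) (Fin d ⊕ Fin e) ℂ := Matrix.of fun i j => b i j with hM
  refine ⟨Mᴴ, ?_, ?_⟩
  · rw [Matrix.mem_unitaryGroup_iff']
    have hMM : star Mᴴ * Mᴴ = M * Mᴴ := by rw [star_eq_conjTranspose, conjTranspose_conjTranspose]
    rw [hMM]
    ext i j
    have hbo := orthonormal_iff_ite.mp b.orthonormal i j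
    have h1 : (inner ℂ (b i) (b j) : ℂ) = ∑ k, starRingEnd ℂ (b i k) * b j k := by
      simp [PiLp.inner_apply, RCLike.inner_apply, mul_comm]
    rw [h1] at hbo
    have h2 : (M * Mᴴ) i j = ∑ k, M i k * starRingEnd ℂ (M j k) := by
      simp only [Matrix.mul_apply, conjTranspose_apply, RCLike.star_def]
    rw [h2]
    have h3 : ∑ k, M i k * starRingEnd ℂ (M j k)
        = starRingEnd ℂ (∑ k, starRingEnd ℂ (M i k) * M j k) := by
      rw [map_sum (starRingEnd ℂ)]; congr 1; ext k
      simp only [_root_.map_mul, Complex.conj_conj]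
    have h4 : ∑ k, starRingEnd ℂ (M i k) * M j k = if i = j then 1 else 0 := hbo
    rw [h3, h4]
    by_cases hij : i = j <;> simp [hij, Matrix.one_apply]
  · intro i j
    rw [conjTranspose_conjTranspose]
    have hbi : b (Sum.inl i) = v (Sum.inl i) := hb _ ⟨i, rfl⟩
    show b (Sum.inl i) j = A i j
    rw [hbi]; rfl

/-- If `H = [[0_{d×d}, A],[B, C]]` is unitary of size `N = d + (d + e)` (so `N ≥ 2d`),
then there are unitary `U, V ∈ U(N−d)` with `H = diag(I_d, U) · J · diag(I_d, V*)`. -/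
theorem stmt5 (d e : ℕ)
    (H : Matrix (Fin d ⊕ (Fin d ⊕ Fin e)) (Fin d ⊕ (Fin d ⊕ Fin e)) ℂ)
    (hH : H ∈ Matrix.unitaryGroup (Fin d ⊕ (Fin d ⊕ Fin e)) ℂ)
    (h0 : H.toBlocks₁₁ = 0) :
    ∃ U V : Matrix (Fin d ⊕ Fin e) (Fin d ⊕ Fin e) ℂ,
      U ∈ Matrix.unitaryGroup (Fin d ⊕ Fin e) ℂ ∧
      V ∈ Matrix.unitaryGroup (Fin d ⊕ Fin e) ℂ ∧
      H = Matrix.fromBlocks 1 0 0 U * Jmat d e * Matrix.fromBlocks 1 0 0 Vᴴ := by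
  classical
  -- diag(1, V) is unitary when V is
  have hDiag : ∀ (V : Matrix (Fin d ⊕ Fin e) (Fin d ⊕ Fin e) ℂ),
      V ∈ Matrix.unitaryGroup (Fin d ⊕ Fin e) ℂ →
      (Matrix.fromBlocks (1 : Matrix (Fin d) (Fin d) ℂ) 0 0 V) ∈
        Matrix.unitaryGroup (Fin d ⊕ (Fin d ⊕ Fin e)) ℂ := by
    intro V hV
    rw [Matrix.mem_unitaryGroup_iff]
    have hs : star (Matrix.fromBlocks (1 : Matrix (Fin d) (Fin d) ℂ) 0 0 V)
        = Matrix.fromBlocks 1 0 0 (star V) := by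
      simp [star_eq_conjTranspose, Matrix.fromBlocks_conjTranspose]
    rw [hs, Matrix.fromBlocks_multiply]
    simp [Matrix.mem_unitaryGroup_iff.mp hV, Matrix.fromBlocks_one]
  set A : Matrix (Fin d) (Fin d ⊕ Fin e) ℂ := H.toBlocks₁₂ with hAdef
  have hzero : ∀ i j, H (Sum.inl i) (Sum.inl j) = 0 := by
    intro i j
    have := congrFun (congrFun h0 i) j
    simpa [Matrix.toBlocks₁₁] using this
  have hA : ∀ i j, ∑ k, A i k * star (A j k) = if i = j then 1 else 0 := by
    intro i j
    have h1 := congrFun (congrFun (Matrix.mem_unitaryGroup_iff.mp hH) (Sum.inl i)) (Sum.inl j)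
    rw [Matrix.mul_apply, Fintype.sum_sum_type] at h1
    simp only [star_eq_conjTranspose, Matrix.conjTranspose_apply, hzero, zero_mul,
      Finset.sum_const_zero, zero_add] at h1
    have hAk : ∀ i k, A i k = H (Sum.inl i) (Sum.inr k) := fun _ _ => rfl
    simp only [hAk]
    rw [h1, Matrix.one_apply]
    simp
  obtain ⟨V, hVu, hVrow⟩ := extend_to_unitary d e A hA
  set D : Matrix (Fin d ⊕ (Fin d ⊕ Fin e)) (Fin d ⊕ (Fin d ⊕ Fin e)) ℂ :=
    Matrix.fromBlocks (1 : Matrix (Fin d) (Fin d) ℂ) 0 0 V with hDdef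
  have hDu := hDiag V hVu
  set K := H * D with hKdef
  have hKu : K ∈ Matrix.unitaryGroup (Fin d ⊕ (Fin d ⊕ Fin e)) ℂ := mul_mem hH hDu
  set E : Matrix (Fin d) (Fin d ⊕ Fin e) ℂ :=
    Matrix.of fun (i : Fin d) (j : Fin d ⊕ Fin e) => if Sum.inl i = j then (1:ℂ) else 0 with hEdef
  set Eb : Matrix (Fin d ⊕ Fin e) (Fin d) ℂ :=
    Matrix.of fun (i : Fin d ⊕ Fin e) (j : Fin d) => if i = Sum.inl j then (1:ℂ) else 0 with hEbdef
  set B : Matrix (Fin d ⊕ Fin e) (Fin d) ℂ := H.toBlocks₂₁ with hBdef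
  set W : Matrix (Fin d ⊕ Fin e) (Fin d ⊕ Fin e) ℂ := H.toBlocks₂₂ * V with hWdef
  have hKblocks : K = Matrix.fromBlocks 0 E B W := by
    have hHb : H = Matrix.fromBlocks 0 A B H.toBlocks₂₂ := by
      rw [hAdef, hBdef, ← h0, Matrix.fromBlocks_toBlocks]
    have hVV : Vᴴ * V = 1 := by
      have := Matrix.mem_unitaryGroup_iff'.mp hVu
      rwa [star_eq_conjTranspose] at this
    have hAV : A * V = E := by
      ext i c
      rw [Matrix.mul_apply]
      have h2 : ∑ k, A i k * V k c = (Vᴴ * V) (Sum.inl i) c := by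
        rw [Matrix.mul_apply]; congr 1; ext k; rw [← hVrow i k]
      rw [h2, hVV, Matrix.one_apply]
      rfl
    rw [hKdef, hHb, hDdef, Matrix.fromBlocks_multiply]
    congr 1 <;> simp [hAV, ← hWdef]
  have hKK : star K * K = 1 := Matrix.mem_unitaryGroup_iff'.mp hKu
  have hWzero : ∀ a j, W a (Sum.inl j) = 0 := by
    intro a j
    have h1 := congrFun (congrFun hKK (Sum.inr (Sum.inl j))) (Sum.inr (Sum.inl j))
    rw [Matrix.mul_apply, Fintype.sum_sum_type] at h1
    simp only [star_eq_conjTranspose, Matrix.conjTranspose_apply, hKblocks,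
      Matrix.fromBlocks_apply₁₂, Matrix.fromBlocks_apply₂₂] at h1
    have hE1 : ∑ x : Fin d, star (E x (Sum.inl j)) * E x (Sum.inl j) = 1 := by
      simp [hEdef, apply_ite]
    rw [hE1, Matrix.one_apply_eq] at h1
    have hsum0 : ∑ x : Fin d ⊕ Fin e, star (W x (Sum.inl j)) * W x (Sum.inl j) = 0 := by
      linear_combination h1
    have hsum : ∑ x : Fin d ⊕ Fin e, Complex.normSq (W x (Sum.inl j)) = 0 := by
      have hcast : ((∑ x : Fin d ⊕ Fin e, Complex.normSq (W x (Sum.inl j)) : ℝ) : ℂ) = 0 := by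
        rw [Complex.ofReal_sum]
        rw [← hsum0]
        congr 1; ext x
        rw [Complex.star_def, ← Complex.normSq_eq_conj_mul_self]
      exact_mod_cast hcast
    have := (Finset.sum_eq_zero_iff_of_nonneg
      (fun x _ => Complex.normSq_nonneg (W x (Sum.inl j)))).mp hsum a (Finset.mem_univ a)
    exact Complex.normSq_eq_zero.mp this
  set U : Matrix (Fin d ⊕ Fin e) (Fin d ⊕ Fin e) ℂ :=
    Matrix.of fun a c => Sum.elim (fun j => B a j) (fun j => W a (Sum.inr j)) c with hUdef
  set σ : (Fin d ⊕ Fin e) → Fin d ⊕ (Fin d ⊕ Fin e) :=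
    Sum.elim Sum.inl (fun j => Sum.inr (Sum.inr j)) with hσ
  have hσinj : Function.Injective σ := by
    rintro (a | a) (b | b) h <;> simp [hσ] at h <;> simp [h]
  have htop : ∀ (x : Fin d) (c : Fin d ⊕ Fin e), K (Sum.inl x) (σ c) = 0 := by
    intro x c
    rw [hKblocks]
    cases c <;> simp [hσ, hEdef]
  have hbot : ∀ (x : Fin d ⊕ Fin e) (c : Fin d ⊕ Fin e), K (Sum.inr x) (σ c) = U x c := by
    intro x c
    rw [hKblocks]
    cases c <;> rfl
  have hUu : U ∈ Matrix.unitaryGroup (Fin d ⊕ Fin e) ℂ := by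
    rw [Matrix.mem_unitaryGroup_iff']
    ext c c'
    have h1 := congrFun (congrFun hKK (σ c)) (σ c')
    rw [Matrix.mul_apply, Fintype.sum_sum_type] at h1
    simp only [star_eq_conjTranspose, Matrix.conjTranspose_apply, htop, hbot, star_zero,
      zero_mul, Finset.sum_const_zero, zero_add] at h1
    have h2 : (star U * U) c c' = ∑ x, star (U x c) * U x c' := by
      rfl
    rw [h2, h1, Matrix.one_apply, Matrix.one_apply]
    by_cases hcc : c = c'
    · simp [hcc]
    · have hns : ¬ σ c = σ c' := fun h => hcc (hσinj h)
      simp [hcc, hns]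
  refine ⟨U, V, hUu, hVu, ?_⟩
  have hDstar : star D = Matrix.fromBlocks 1 0 0 Vᴴ := by
    rw [hDdef]
    simp [star_eq_conjTranspose, Matrix.fromBlocks_conjTranspose]
  have hJ : Jmat d e = Matrix.fromBlocks 0 E Eb (Matrix.fromBlocks 0 0 0 1) := rfl
  have hUEb : U * Eb = B := by
    ext a j
    rw [Matrix.mul_apply]
    simp [hEbdef, mul_ite, mul_one, mul_zero, Finset.sum_ite_eq']
    rfl
  have hUF : U * Matrix.fromBlocks 0 0 0 1 = W := by
    ext a c
    rw [Matrix.mul_apply, Fintype.sum_sum_type]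
    cases c with
    | inl j => simp [hWzero a j]
    | inr j =>
      simp [mul_ite, Matrix.one_apply]
      rfl
  have hKJ : Matrix.fromBlocks 1 0 0 U * Jmat d e = K := by
    rw [hJ, hKblocks, Matrix.fromBlocks_multiply, hUEb, hUF]
    simp
  rw [hKJ, hKdef, ← hDstar, mul_assoc, Matrix.mem_unitaryGroup_iff.mp hDu, mul_one]
end

section
/- Let N ≥ 2d. The set of N×N unitary matrices whose upper-left d×d block is zero is a smooth real manifold of dimension N² − 2d², hence of real codimension N² inside the affine space T of N×N complex matrices with zero upper-left d×d block (which has real dimension 2N² − 2d²). -/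
open Matrix

open Module Set


theorem exists_chart_of_submersion {E F : Type*}
    [NormedAddCommGroup E] [NormedSpace ℝ E] [FiniteDimensional ℝ E]
    [NormedAddCommGroup F] [NormedSpace ℝ F] [FiniteDimensional ℝ F]
    {p : E → Prop} (f : E → F) (hp : ∀ x, p x ↔ f x = 0) (k : ℕ)
    (hk : finrank ℝ E = finrank ℝ F + k)
    (hf : ∀ x : E, p x → ∃ f' : E →L[ℝ] F,
      HasStrictFDerivAt f f' x ∧ LinearMap.range (f' : E →ₗ[ℝ] F) = ⊤)
    (a : {x : E // p x}) :
    ∃ c : OpenPartialHomeomorph {x : E // p x} (EuclideanSpace ℝ (Fin k)),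
      a ∈ c.source := by
  classical
  obtain ⟨f', hder, hsurj⟩ := hf a.1 a.2
  set G := LinearMap.ker (f' : E →ₗ[ℝ] F) with hG
  obtain ⟨G', hcompl⟩ := Submodule.exists_isCompl G
  -- projection onto G
  set gl : E →ₗ[ℝ] G := G.linearProjOfIsCompl G' hcompl with hgl
  set g : E →L[ℝ] G := LinearMap.toContinuousLinearMap gl with hg
  have hrange_g : LinearMap.range (g : E →ₗ[ℝ] G) = ⊤ := by
    rw [LinearMap.range_eq_top]
    intro y
    exact ⟨y.1, Submodule.linearProjOfIsCompl_apply_left hcompl y⟩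
  have hker_g : LinearMap.ker (g : E →ₗ[ℝ] G) = G' := by
    have h1 : LinearMap.ker (g : E →ₗ[ℝ] G) = LinearMap.ker gl := by
      ext x; simp [hg, LinearMap.mem_ker]
    rw [h1]
    exact Submodule.linearProjOfIsCompl_ker hcompl
  have hcompl' : IsCompl (LinearMap.ker (f' : E →ₗ[ℝ] F)) (LinearMap.ker (g : E →ₗ[ℝ] G)) := by
    rw [hker_g]; exact hcompl
  set φ : ImplicitFunctionData ℝ E F G :=
    { leftFun := f
      leftDeriv := f'
      rightFun := g
      rightDeriv := g
      pt := a.1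
      hasStrictFDerivAt_leftFun := hder
      hasStrictFDerivAt_rightFun := g.hasStrictFDerivAt
      range_leftDeriv := hsurj
      range_rightDeriv := hrange_g
      isCompl_ker := hcompl' } with hφ
  set ψ := φ.toOpenPartialHomeomorph with hψ
  have hψcoe : ∀ x : E, ψ x = (f x, g x) := fun x => rfl
  have hGrank : finrank ℝ G = k := by
    have h1 := LinearMap.finrank_range_add_finrank_ker (f' : E →ₗ[ℝ] F)
    have h2 : LinearMap.range (f' : E →ₗ[ℝ] F) = ⊤ := hsurj
    rw [h2, finrank_top] at h1
    have h3 : finrank ℝ G = finrank ℝ (LinearMap.ker (f' : E →ₗ[ℝ] F)) := rfl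
    omega
  have : finrank ℝ G = finrank ℝ (EuclideanSpace ℝ (Fin k)) := by
    rw [hGrank, finrank_euclideanSpace_fin]
  set e : G ≃L[ℝ] EuclideanSpace ℝ (Fin k) := ContinuousLinearEquiv.ofFinrankEq this with he
  -- key facts about ψ
  have hsymm : ∀ q ∈ ψ.target, ψ (ψ.symm q) = q := fun q hq => ψ.right_inv hq
  have hfψ : ∀ q ∈ ψ.target, f (ψ.symm q) = q.1 := by
    intro q hq
    have := congrArg Prod.fst (hsymm q hq)
    simpa [hψcoe] using this
  have hgψ : ∀ q ∈ ψ.target, g (ψ.symm q) = q.2 := by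
    intro q hq
    have := congrArg Prod.snd (hsymm q hq)
    simpa [hψcoe] using this
  refine ⟨{
      toFun := fun x => e (g x.1)
      invFun := fun z =>
        if hz : ((0 : F), e.symm z) ∈ ψ.target then
          ⟨ψ.symm ((0 : F), e.symm z), (hp _).2 (hfψ _ hz)⟩
        else a
      source := Subtype.val ⁻¹' ψ.source
      target := {z | ((0 : F), e.symm z) ∈ ψ.target}
      map_source' := ?_
      map_target' := ?_
      left_inv' := ?_
      right_inv' := ?_
      open_source := ψ.open_source.preimage continuous_subtype_val
      open_target := ?_
      continuousOn_toFun := ?_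
      continuousOn_invFun := ?_ }, ?_⟩
  · -- map_source
    intro x hx
    have : ψ x.1 ∈ ψ.target := ψ.map_source hx
    have hfx : f x.1 = 0 := (hp _).1 x.2
    simpa [hψcoe, hfx] using this
  · -- map_target
    intro z hz
    simp only [mem_setOf_eq] at hz
    simp only [hz, dif_pos, mem_preimage]
    exact ψ.map_target hz
  · -- left_inv
    intro x hx
    have hfx : f x.1 = 0 := (hp _).1 x.2
    have h1 : ((0 : F), e.symm (e (g x.1))) = ψ x.1 := by
      simp [hψcoe, hfx]
    have h2 : ψ x.1 ∈ ψ.target := ψ.map_source hx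
    have hz : ((0 : F), e.symm (e (g x.1))) ∈ ψ.target := by rw [h1]; exact h2
    rw [dif_pos hz]
    apply Subtype.ext
    show ψ.symm ((0 : F), e.symm (e (g x.1))) = x.1
    rw [h1]
    exact ψ.left_inv hx
  · -- right_inv
    intro z hz
    simp only [mem_setOf_eq] at hz
    rw [dif_pos hz]
    have := hgψ _ hz
    simp [this]
  · -- cont toFun
    exact (e.continuous.comp (g.continuous.comp continuous_subtype_val)).continuousOn
  · -- cont invFun
    rw [Topology.IsInducing.continuousOn_iff Topology.IsEmbedding.subtypeVal.isInducing]
    have hcont : ContinuousOn (fun z : EuclideanSpace ℝ (Fin k) =>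
        ψ.symm ((0 : F), e.symm z)) {z | ((0 : F), e.symm z) ∈ ψ.target} := by
      apply ψ.continuousOn_symm.comp
      · exact (continuous_const.prodMk e.symm.continuous).continuousOn
      · intro z hz; exact hz
    refine hcont.congr ?_
    intro z hz
    simp only [mem_setOf_eq] at hz
    simp [Function.comp, hz, dif_pos]
  · -- open_target
    have : Continuous fun z : EuclideanSpace ℝ (Fin k) => ((0 : F), e.symm z) :=
      continuous_const.prodMk e.symm.continuous
    exact ψ.open_target.preimage this
  · -- a in source
    exact φ.pt_mem_toOpenPartialHomeomorph_source

theorem chartedSpace_of_submersion {E F : Type*}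
    [NormedAddCommGroup E] [NormedSpace ℝ E] [FiniteDimensional ℝ E]
    [NormedAddCommGroup F] [NormedSpace ℝ F] [FiniteDimensional ℝ F]
    {p : E → Prop} (f : E → F) (hp : ∀ x, p x ↔ f x = 0) (k : ℕ)
    (hk : finrank ℝ E = finrank ℝ F + k)
    (hf : ∀ x : E, p x → ∃ f' : E →L[ℝ] F,
      HasStrictFDerivAt f f' x ∧ LinearMap.range (f' : E →ₗ[ℝ] F) = ⊤) :
    Nonempty (ChartedSpace (EuclideanSpace ℝ (Fin k)) {x : E // p x}) := by
  refine ⟨{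
    atlas := Set.range fun a => (exists_chart_of_submersion f hp k hk hf a).choose
    chartAt := fun a => (exists_chart_of_submersion f hp k hk hf a).choose
    mem_chart_source := fun a => (exists_chart_of_submersion f hp k hk hf a).choose_spec
    chart_mem_atlas := fun a => ⟨a, rfl⟩ }⟩


section Plain
variable (d N : ℕ)

abbrev EE := Matrix (Fin N) (Fin N) ℂ

noncomputable def blockL (h : d ≤ N) : EE N →ₗ[ℝ] Matrix (Fin d) (Fin d) ℂ where
  toFun H := Matrix.of fun i j => H (Fin.castLE h i) (Fin.castLE h j)
  map_add' X Y := by ext i j; simp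
  map_smul' r X := by ext i j; simp

lemma blockL_eq_zero_iff (h : d ≤ N) (H : EE N) :
    blockL d N h H = 0 ↔ ∀ i j : Fin N, (i : ℕ) < d → (j : ℕ) < d → H i j = 0 := by
  constructor
  · intro h0 i j hi hj
    have := Matrix.ext_iff.mpr h0 ⟨i, hi⟩ ⟨j, hj⟩
    simpa [blockL, Fin.castLE, Fin.ext_iff] using this
  · intro h0
    ext i j
    exact h0 _ _ (by simpa using i.isLt) (by simpa using j.isLt)

lemma blockL_surjective (h : d ≤ N) : Function.Surjective (blockL d N h) := by
  intro C
  refine ⟨Matrix.of fun i j =>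
    if hi : (i : ℕ) < d then (if hj : (j : ℕ) < d then C ⟨i, hi⟩ ⟨j, hj⟩ else 0) else 0, ?_⟩
  ext i j
  simp [blockL, i.isLt, j.isLt]


lemma key_surj (h : d ≤ N) (a : EE N) (ha1 : star a * a = 1) (ha2 : a * star a = 1)
    (hab : ∀ i j : Fin N, (i : ℕ) < d → (j : ℕ) < d → a i j = 0)
    (w : EE N) (hw : star w = w) (C : Matrix (Fin d) (Fin d) ℂ) :
    ∃ Z : EE N, star a * Z + star Z * a = w ∧ blockL d N h Z = C := by
  set Z0 : EE N := (1/2 : ℂ) • (a * w) with hZ0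
  set Cext : EE N := Matrix.of (fun i j =>
    if hi : (i : ℕ) < d then
      (if hj : (j : ℕ) < d then C ⟨i, hi⟩ ⟨j, hj⟩ - Z0 i j else 0) else 0) with hCext
  set M : EE N := star a * Cext with hM
  have hMrow : ∀ (jj : Fin N), (jj : ℕ) < d → ∀ k, M jj k = 0 := by
    intro jj hjj k
    rw [hM, Matrix.mul_apply]
    apply Finset.sum_eq_zero
    intro m _
    by_cases hm : (m : ℕ) < d
    · have : a m jj = 0 := hab m jj hm hjj
      rw [Matrix.star_apply, this]
      simp
    · have : Cext m k = 0 := by rw [hCext]; simp [Matrix.of_apply, hm]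
      rw [this, mul_zero]
  refine ⟨Z0 + a * (M - star M), ?_, ?_⟩
  · -- the unitarity equation
    have hstarZ0 : star Z0 = (1/2 : ℂ) • (w * star a) := by
      rw [hZ0, star_smul, StarMul.star_mul, hw]
      norm_num
    have e1 : star (Z0 + a * (M - star M)) = star Z0 + (star M - M) * star a := by
      rw [star_add, StarMul.star_mul, star_sub, star_star]
    rw [e1]
    rw [add_mul, mul_add]
    have e2 : (star M - M) * star a * a = star M - M := by
      rw [mul_assoc, ha1, mul_one]
    have e3 : star a * (a * (M - star M)) = M - star M := by
      rw [← mul_assoc, ha1, one_mul]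
    rw [e2, e3, hstarZ0]
    have e4 : (1/2 : ℂ) • (w * star a) * a = (1/2 : ℂ) • w := by
      rw [smul_mul_assoc, mul_assoc, ha1, mul_one]
    have e5 : star a * Z0 = (1/2 : ℂ) • w := by
      rw [hZ0, mul_smul_comm, ← mul_assoc, ha1, one_mul]
    rw [e4, e5]
    rw [show ∀ X Y : EE N, (1/2 : ℂ) • w + X + ((1/2 : ℂ) • w + Y) =
      ((1/2 : ℂ) • w + (1/2 : ℂ) • w) + (X + Y) from fun X Y => by abel]
    rw [← add_smul]
    have : (1/2 : ℂ) + 1/2 = 1 := by norm_num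
    rw [this, one_smul]
    abel
  · -- the block equation
    have haM : a * M = Cext := by rw [hM, ← mul_assoc, ha2, one_mul]
    ext i j
    have hci : ((Fin.castLE h i : Fin N) : ℕ) < d := by simpa using i.isLt
    have hcj : ((Fin.castLE h j : Fin N) : ℕ) < d := by simpa using j.isLt
    show (Z0 + a * (M - star M)) (Fin.castLE h i) (Fin.castLE h j) = C i j
    have hstarMcol : ∀ k, (star M) k (Fin.castLE h j) = 0 := by
      intro k
      rw [Matrix.star_apply, hMrow _ hcj k, star_zero]
    have h6 : (a * star M) (Fin.castLE h i) (Fin.castLE h j) = 0 := by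
      rw [Matrix.mul_apply]
      apply Finset.sum_eq_zero
      intro k _
      rw [hstarMcol k, mul_zero]
    rw [mul_sub]
    rw [Matrix.add_apply, Matrix.sub_apply, h6, haM]
    rw [hCext]
    simp only [Matrix.of_apply, hci, hcj, dif_pos]
    have : (⟨((Fin.castLE h i : Fin N) : ℕ), hci⟩ : Fin d) = i := by
      apply Fin.ext; simp
    have h7 : (⟨((Fin.castLE h j : Fin N) : ℕ), hcj⟩ : Fin d) = j := by
      apply Fin.ext; simp
    rw [this, h7]
    ring

noncomputable def sa : Submodule ℝ (EE N) := selfAdjoint.submodule ℝ (EE N)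
lemma mem_sa (X : EE N) : X ∈ sa N ↔ star X = X := Iff.rfl

noncomputable def piSA : EE N →ₗ[ℝ] (sa N) where
  toFun X := ⟨(1/2 : ℝ) • (X + star X), by
    rw [mem_sa, star_smul, star_trivial, star_add, star_star, add_comm]⟩
  map_add' X Y := by
    ext1
    show (1/2 : ℝ) • (X + Y + star (X + Y)) =
      (1/2 : ℝ) • (X + star X) + (1/2 : ℝ) • (Y + star Y)
    rw [star_add, ← smul_add]
    congr 1
    abel
  map_smul' r X := by
    ext1
    show (1/2 : ℝ) • (r • X + star (r • X)) = r • ((1/2 : ℝ) • (X + star X))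
    rw [star_smul, star_trivial, ← smul_add, smul_comm]

lemma piSA_apply_selfAdjoint (X : EE N) (hX : star X = X) :
    piSA N X = ⟨X, hX⟩ := by
  ext1
  show (1/2 : ℝ) • (X + star X) = X
  rw [hX, ← two_smul ℝ X, smul_smul]
  norm_num

end Plain

section Normed
variable (d N : ℕ)
attribute [local instance] Matrix.normedAddCommGroup Matrix.normedSpace

noncomputable def mulL : EE N →ₗ[ℝ] EE N →L[ℝ] EE N where
  toFun X := LinearMap.toContinuousLinearMap (LinearMap.mul ℝ (EE N) X)
  map_add' X Y := by ext Z; simp [add_mul]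
  map_smul' r X := by ext Z; simp [smul_mul_assoc]

noncomputable def mulCLM : EE N →L[ℝ] EE N →L[ℝ] EE N :=
  LinearMap.toContinuousLinearMap (mulL N)

lemma mulCLM_apply (X Y : EE N) : mulCLM N X Y = X * Y := rfl

noncomputable def starCLM : EE N →L[ℝ] EE N :=
  LinearMap.toContinuousLinearMap (starLinearEquiv ℝ (A := EE N)).toLinearMap

lemma starCLM_apply (X : EE N) : starCLM N X = star X := rfl

noncomputable def piSACLM : EE N →L[ℝ] (sa N) :=
  LinearMap.toContinuousLinearMap (piSA N)

noncomputable def blockCLM (h : d ≤ N) : EE N →L[ℝ] Matrix (Fin d) (Fin d) ℂ :=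
  LinearMap.toContinuousLinearMap (blockL d N h)

/-- the defining map -/
noncomputable def fmap (h : d ≤ N) : EE N → (sa N) × Matrix (Fin d) (Fin d) ℂ :=
  fun H => (piSA N (star H * H - 1), blockL d N h H)

/-- its derivative at `a` -/
noncomputable def fderivF (h : d ≤ N) (a : EE N) :
    EE N →L[ℝ] (sa N) × Matrix (Fin d) (Fin d) ℂ :=
  ((piSACLM N).comp
    ((mulCLM N (star a)) + id (α := EE N →L[ℝ] EE N) (((mulCLM N).flip a).comp (starCLM N)))).prod (blockCLM d N h)

lemma fderivF_apply (h : d ≤ N) (a Z : EE N) :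
    fderivF d N h a Z = (piSA N (star a * Z + star Z * a), blockL d N h Z) := rfl

lemma fmap_hasStrictFDerivAt (h : d ≤ N) (a : EE N) :
    HasStrictFDerivAt (fmap d N h) (fderivF d N h a) a := by
  have hb : IsBoundedBilinearMap ℝ (fun p : EE N × EE N => mulCLM N p.1 p.2) :=
    (mulCLM N).isBoundedBilinearMap
  have hj : HasStrictFDerivAt (fun H : EE N => (star H, H))
      ((starCLM N).prod (ContinuousLinearMap.id ℝ (EE N))) a :=
    ((starCLM N).prod (ContinuousLinearMap.id ℝ (EE N))).hasStrictFDerivAt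
  have h1 : HasStrictFDerivAt (fun p : EE N × EE N => mulCLM N p.1 p.2)
      (hb.deriv (star a, a)) ((fun H : EE N => (star H, H)) a) := hb.hasStrictFDerivAt _
  have h2 := HasStrictFDerivAt.comp (f := fun H : EE N => (star H, H))
    (g := fun p : EE N × EE N => mulCLM N p.1 p.2) a h1 hj
  have h3 := (h2.sub_const 1)
  have h4 := ((piSACLM N).hasStrictFDerivAt).comp a h3
  have h5 := HasStrictFDerivAt.prodMk h4 ((blockCLM d N h).hasStrictFDerivAt)
  have heq : (fmap d N h) = fun H : EE N =>
      ((piSACLM N) ((fun x : EE N => mulCLM N (star x) x - 1) H), blockCLM d N h H) := rfl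
  rw [show fderivF d N h a = ((piSACLM N).comp
      ((hb.deriv (star a, a)).comp
        ((starCLM N).prod (ContinuousLinearMap.id ℝ (EE N))))).prod (blockCLM d N h) from ?_]
  · exact h5
  · refine ContinuousLinearMap.ext fun Z => ?_
    refine Prod.ext ?_ rfl
    show piSA N (star a * Z + star Z * a) =
      piSA N ((hb.deriv (star a, a)) (star Z, Z))
    rw [hb.deriv_apply]
    rfl

lemma fderivF_surjective (h : d ≤ N) (a : EE N)
    (ha1 : star a * a = 1) (ha2 : a * star a = 1)
    (hab : ∀ i j : Fin N, (i : ℕ) < d → (j : ℕ) < d → a i j = 0) :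
    LinearMap.range (fderivF d N h a : EE N →ₗ[ℝ] (sa N) × Matrix (Fin d) (Fin d) ℂ) = ⊤ := by
  rw [LinearMap.range_eq_top]
  rintro ⟨W, C⟩
  obtain ⟨Z, hZ1, hZ2⟩ := key_surj d N h a ha1 ha2 hab W.1 W.2 C
  refine ⟨Z, ?_⟩
  rw [ContinuousLinearMap.coe_coe, fderivF_apply, hZ1, hZ2]
  have := piSA_apply_selfAdjoint N W.1 W.2
  rw [this]

end Normed


section Plain2
variable (d N : ℕ)

noncomputable def ska : Submodule ℝ (EE N) := skewAdjoint.submodule ℝ (EE N)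

lemma mem_ska (X : EE N) : X ∈ ska N ↔ star X = -X := Iff.rfl

-- IsCompl
lemma isCompl_sa_ska : IsCompl (sa N) (ska N) := by
  constructor
  · rw [disjoint_iff]
    ext X
    simp only [Submodule.mem_inf, Submodule.mem_bot]
    constructor
    · rintro ⟨h1, h2⟩
      rw [mem_sa] at h1; rw [mem_ska, h1] at h2
      have h4 : (2 : ℝ) • X = 0 := by
        rw [two_smul]; nth_rewrite 2 [h2]; simp
      have := congrArg (fun Y => (2 : ℝ)⁻¹ • Y) h4
      simpa using this
    · rintro rfl
      exact ⟨(sa N).zero_mem, (ska N).zero_mem⟩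
  · rw [codisjoint_iff]
    ext X
    simp only [Submodule.mem_top, iff_true]
    have : X = ((1/2 : ℝ) • (X + star X)) + ((1/2 : ℝ) • (X - star X)) := by
      rw [← smul_add]; rw [show X + star X + (X - star X) = (2:ℝ) • X by rw [two_smul]; abel]
      rw [smul_smul]; norm_num
    rw [this]
    apply Submodule.add_mem_sup
    · rw [mem_sa]; rw [star_smul, star_add, star_star, star_trivial]; rw [add_comm]
    · rw [mem_ska]; rw [star_smul, star_sub, star_star, star_trivial, ← smul_neg, neg_sub]

noncomputable def saEquivSka : (sa N) ≃ₗ[ℝ] (ska N) where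
  toFun X := ⟨Complex.I • X.1, by
    rw [mem_ska]
    rw [star_smul, X.2, Complex.star_def, Complex.conj_I, neg_smul]⟩
  invFun Y := ⟨(-Complex.I) • Y.1, by
    rw [mem_sa]
    rw [star_smul, (mem_ska N _).1 Y.2]
    rw [Complex.star_def, map_neg, Complex.conj_I, neg_neg, smul_neg, ← neg_smul]⟩
  map_add' X Y := by
    ext1; exact smul_add Complex.I X.1 Y.1
  map_smul' r X := by
    ext1; exact smul_comm Complex.I r X.1
  left_inv X := by
    ext1
    show (-Complex.I) • (Complex.I • X.1) = X.1
    rw [smul_smul, neg_mul, Complex.I_mul_I, neg_neg, one_smul]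
  right_inv Y := by
    ext1
    show Complex.I • ((-Complex.I) • Y.1) = Y.1
    rw [smul_smul, mul_neg, Complex.I_mul_I, neg_neg, one_smul]

lemma finrank_EE : finrank ℝ (EE N) = 2 * N ^ 2 := by
  rw [Module.finrank_matrix]
  simp [Complex.finrank_real_complex]
  ring

lemma finrank_sa : finrank ℝ (sa N) = N ^ 2 := by
  have h1 := Submodule.finrank_add_eq_of_isCompl (isCompl_sa_ska N)
  have h2 : finrank ℝ (sa N) = finrank ℝ (ska N) := (saEquivSka N).finrank_eq
  rw [finrank_EE] at h1
  omega


lemma fmap_eq_zero_iff (h : d ≤ N) (H : EE N) :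
    (H ∈ Matrix.unitaryGroup (Fin N) ℂ ∧
      ∀ i j : Fin N, (i : ℕ) < d → (j : ℕ) < d → H i j = 0)
    ↔ fmap d N h H = 0 := by
  have hsa : star (star H * H - 1) = star H * H - 1 := by
    rw [star_sub, StarMul.star_mul, star_star, star_one]
  constructor
  · rintro ⟨hu, hb⟩
    have h1 : star H * H = 1 := Matrix.mem_unitaryGroup_iff'.1 hu
    show (piSA N (star H * H - 1), blockL d N h H) = 0
    rw [h1, sub_self]
    exact Prod.ext (map_zero _) ((blockL_eq_zero_iff d N h H).2 hb)
  · intro h0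
    have h1 : piSA N (star H * H - 1) = 0 := congrArg Prod.fst h0
    have h2 : blockL d N h H = 0 := congrArg Prod.snd h0
    rw [piSA_apply_selfAdjoint N _ hsa] at h1
    have h3 : star H * H - 1 = 0 := congrArg Subtype.val h1
    have h4 : star H * H = 1 := by rwa [sub_eq_zero] at h3
    exact ⟨Matrix.mem_unitaryGroup_iff'.2 h4, (blockL_eq_zero_iff d N h H).1 h2⟩

lemma finrank_Md : finrank ℝ (Matrix (Fin d) (Fin d) ℂ) = 2 * d ^ 2 := by
  rw [Module.finrank_matrix]
  simp [Complex.finrank_real_complex]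
  ring

lemma finrank_F : finrank ℝ ((sa N) × Matrix (Fin d) (Fin d) ℂ) = N ^ 2 + 2 * d ^ 2 := by
  rw [Module.finrank_prod, finrank_sa, finrank_Md]

end Plain2


/-- For `N ≥ 2d`, the set of `N×N` unitary matrices whose upper-left `d×d` block is
zero is a manifold of real dimension `N² − 2d²` (it admits an atlas modelled on
`ℝ^{N²−2d²}`); moreover the affine space `T` of `N×N` complex matrices with vanishing
upper-left `d×d` block has real dimension `2N² − 2d²`, so the codimension is `N²`. -/
theorem stmt7 (d N : ℕ) (h : 2 * d ≤ N) :
    Nonempty (ChartedSpace (EuclideanSpace ℝ (Fin (N ^ 2 - 2 * d ^ 2)))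
      {H : Matrix (Fin N) (Fin N) ℂ //
        H ∈ Matrix.unitaryGroup (Fin N) ℂ ∧
        ∀ i j : Fin N, (i : ℕ) < d → (j : ℕ) < d → H i j = 0}) ∧
    (∃ T : Submodule ℝ (Matrix (Fin N) (Fin N) ℂ),
      (∀ H, H ∈ T ↔ ∀ i j : Fin N, (i : ℕ) < d → (j : ℕ) < d → H i j = 0) ∧
      Module.finrank ℝ T = 2 * N ^ 2 - 2 * d ^ 2) ∧
    (N ^ 2 - 2 * d ^ 2) + N ^ 2 = 2 * N ^ 2 - 2 * d ^ 2 := by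
  have hdN : d ≤ N := by omega
  have hsq : 4 * d ^ 2 ≤ N ^ 2 := by
    have h2 := Nat.pow_le_pow_left h 2
    have h3 : (2 * d) ^ 2 = 4 * d ^ 2 := by ring
    rw [h3] at h2
    exact h2
  refine ⟨?_, ⟨?_, ?_⟩⟩
  · -- the charted space
    letI : NormedAddCommGroup (Matrix (Fin N) (Fin N) ℂ) := Matrix.normedAddCommGroup
    letI : NormedSpace ℝ (Matrix (Fin N) (Fin N) ℂ) := Matrix.normedSpace
    letI : NormedAddCommGroup (Matrix (Fin d) (Fin d) ℂ) := Matrix.normedAddCommGroup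
    letI : NormedSpace ℝ (Matrix (Fin d) (Fin d) ℂ) := Matrix.normedSpace
    refine chartedSpace_of_submersion (E := EE N)
      (p := fun H : EE N => H ∈ Matrix.unitaryGroup (Fin N) ℂ ∧
        ∀ i j : Fin N, (i : ℕ) < d → (j : ℕ) < d → H i j = 0)
      (fmap d N hdN) (fun H => by exact fmap_eq_zero_iff d N hdN H) (N ^ 2 - 2 * d ^ 2) ?_ ?_
    · rw [finrank_EE N, finrank_F d N]
      omega
    · rintro a ⟨hu, hb⟩
      exact ⟨fderivF d N hdN a, fmap_hasStrictFDerivAt d N hdN a,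
        fderivF_surjective d N hdN a (Matrix.mem_unitaryGroup_iff'.1 hu)
          (Matrix.mem_unitaryGroup_iff.1 hu) hb⟩
  · -- the submodule T
    refine ⟨LinearMap.ker (blockL d N hdN), fun H => ?_, ?_⟩
    · rw [LinearMap.mem_ker]
      exact blockL_eq_zero_iff d N hdN H
    · have h1 := LinearMap.finrank_range_add_finrank_ker (blockL d N hdN)
      rw [LinearMap.range_eq_top.2 (blockL_surjective d N hdN), finrank_top,
        finrank_EE, finrank_Md] at h1
      have key : 2 * d ^ 2 + Module.finrank ℝ ↥(LinearMap.ker (blockL d N hdN)) = 2 * N ^ 2 := h1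
      have key2 : Module.finrank ℝ ↥(LinearMap.ker (blockL d N hdN)) = 2 * N ^ 2 - 2 * d ^ 2 := by
        omega
      exact key2
  · omega
end
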